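/- Let $a,b,c,d,e,f,p,q,r$ be positive real numbers with $d = \frac{pb-qa}{q+2p}$ and $f = \frac{qe}{p}$. Suppose $x,y,z > 0$ satisfy the system $q(-\frac{a}{x}-d\frac{x}{y^2}-e\frac{x}{z^2}) = p(-\frac{b}{y}+2d\frac{x}{y^2}-f\frac{y}{z^2})$ and $r(-\frac{a}{x}-d\frac{x}{y^2}-e\frac{x}{z^2}) = p(-\frac{c}{z}+2e\frac{x}{z^2}+2f\frac{y}{z^2})$, with $x \ne y$. Then $x = \frac{aqyz^2}{pfy^2 + d(q+2p)z^2}$, and if moreover $d(q+2p) > aq$, then $y > x$. -/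

import Mathlib

theorem stmt_12 (a b c d e f p q r : ℝ)
    (ha : 0 < a) (hb : 0 < b) (hc : 0 < c) (hd : 0 < d) (he : 0 < e)
    (hf : 0 < f) (hp : 0 < p) (hq : 0 < q) (hr : 0 < r)
    (hdval : d = (p * b - q * a) / (q + 2 * p)) (hfval : f = q * e / p)
    (x y z : ℝ) (hx : 0 < x) (hy : 0 < y) (hz : 0 < z)
    (h1 : q * (-(a / x) - d * (x / y^2) - e * (x / z^2)) =
          p * (-(b / y) + 2 * d * (x / y^2) - f * (y / z^2)))
    (h2 : r * (-(a / x) - d * (x / y^2) - e * (x / z^2)) =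
          p * (-(c / z) + 2 * e * (x / z^2) + 2 * f * (y / z^2)))
    (hxy : x ≠ y) :
    x = a * q * y * z^2 / (p * f * y^2 + d * (q + 2 * p) * z^2) ∧
      (d * (q + 2 * p) > a * q → y > x) := by
  have hq2p : q + 2 * p ≠ 0 := by positivity
  have hb' : p * b = d * (q + 2 * p) + q * a := by
    rw [hdval]; field_simp; ring
  have hfe : p * f = q * e := by
    rw [hfval]; field_simp
  have hxne : x ≠ 0 := hx.ne'
  have hyne : y ≠ 0 := hy.ne'
  have hzne : z ≠ 0 := hz.ne'
  have h1'' : (x - y) * (q * a * y * z^2 - d * (q + 2 * p) * x * z^2 - q * e * x * y^2) * (y^3 * z^2) = 0 := by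
    field_simp at h1
    linear_combination y^3*z^2 * h1 - x*y^4*z^4 * hb' - x*y^6*z^2 * hfe
  have h1' : (x - y) * (q * a * y * z^2 - d * (q + 2 * p) * x * z^2 - q * e * x * y^2) = 0 := by
    have : (y^3 * z^2) ≠ 0 := by positivity
    exact (mul_eq_zero.mp h1'').resolve_right this
  have key : q * a * y * z^2 - d * (q + 2 * p) * x * z^2 - q * e * x * y^2 = 0 := by
    rcases mul_eq_zero.mp h1' with h | h
    · exact absurd (sub_eq_zero.mp h) hxy
    · exact h
  have hD : 0 < p * f * y^2 + d * (q + 2 * p) * z^2 := by positivity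
  have keq : x * (p * f * y^2 + d * (q + 2 * p) * z^2) = a * q * y * z^2 := by
    linear_combination -key + y^2 * x * hfe
  constructor
  · field_simp
    linarith [keq]
  · intro hgt
    by_contra hle
    push_neg at hle
    nlinarith [keq, mul_pos (sub_pos.mpr hgt) (mul_pos hx (pow_pos hz 2)),
      mul_pos (mul_pos hx (mul_pos hp hf)) (pow_pos hy 2),
      mul_nonneg (mul_nonneg (mul_pos ha hq).le (sub_nonneg.mpr hle)) (sq_nonneg z)]
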